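/- arXiv:1907.00372 — 2 statements merged into one kernel-verified Lean document; each statement's English description precedes it below -/
import Mathlib

section
/- Let A be a super convex space and let J : Hom_SCvx(A, ℝ∞) → ℝ∞ be a map preserving countable convex combinations that is weakly averaging (J of the constant map with value u equals u) and satisfies J(g ∘ m) = g(J(m)) for all countably affine g : ℝ∞ → ℝ∞. Then J is monotone: if m₁, m₂ : A → ℝ∞ are countably affine maps with m₁(a) ≤ m₂(a) for all a ∈ A, then J(m₁) ≤ J(m₂). -/
open Filter

/-- `ℝ∞ = ℝ ∪ {∞}`, the one point extension of the real line. -/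
abbrev Rinf : Type := WithTop ℝ

/-- A countable partition of one: a sequence in `[0,1]` summing to `1`. -/
def IsPartition (α : ℕ → ℝ) : Prop := (∀ i, α i ∈ Set.Icc (0 : ℝ) 1) ∧ HasSum α 1

open Classical in
/-- The countable convex combination `∑ α_i u_i` on `ℝ∞`: the limit of the partial sums
`∑_{i<N} α_i u_i` when every `u i` with nonzero coefficient is real and this limit exists
in `ℝ`, and `∞` otherwise (terms with zero coefficient are ignored, i.e. `0·∞ = 0`). -/
noncomputable def scomb (α : ℕ → ℝ) (u : ℕ → Rinf) : Rinf :=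
  if h : (∀ i, α i ≠ 0 → u i ≠ ⊤) ∧
      ∃ L : ℝ, Tendsto (fun N => ∑ i ∈ Finset.range N, α i * (u i).untopD 0) atTop (nhds L)
  then ((h.2.choose : ℝ) : Rinf) else ⊤

/-- A super convex space: a set with countable convex combinations satisfying the
projection and associativity axioms. -/
structure SuperConvexSpace (A : Type*) where
  comb : (ℕ → ℝ) → (ℕ → A) → A
  proj : ∀ (j : ℕ) (u : ℕ → A), comb (fun i => if i = j then 1 else 0) u = u j
  assoc : ∀ (α : ℕ → ℝ) (β : ℕ → ℕ → ℝ) (u : ℕ → A), IsPartition α →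
    (∀ i, IsPartition (β i)) →
    comb α (fun i => comb (β i) u) = comb (fun j => ∑' i, α i * β i j) u

/-- A map `m : A → ℝ∞` is countably affine if it preserves all countable convex
combinations. -/
def CountablyAffine {A : Type*} (S : SuperConvexSpace A) (m : A → Rinf) : Prop :=
  ∀ (α : ℕ → ℝ), IsPartition α → ∀ u : ℕ → A,
    m (S.comb α u) = scomb α (fun i => m (u i))

/-- A countably affine endomap of `ℝ∞`. -/
def AffEndo (g : Rinf → Rinf) : Prop :=
  ∀ (α : ℕ → ℝ), IsPartition α → ∀ u : ℕ → Rinf, g (scomb α u) = scomb α (fun i => g (u i))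

/-! ### helpers -/

noncomputable def lmap (c b : ℝ) : Rinf → Rinf := fun u => u.map (fun x => c * x + b)

lemma lmap_coe (c b x : ℝ) : lmap c b (x : Rinf) = ((c * x + b : ℝ) : Rinf) := rfl

lemma lmap_top (c b : ℝ) : lmap c b ⊤ = ⊤ := rfl

def psum (α : ℕ → ℝ) (u : ℕ → Rinf) (N : ℕ) : ℝ :=
  ∑ i ∈ Finset.range N, α i * (u i).untopD 0

lemma scomb_eq_coe {α : ℕ → ℝ} {u : ℕ → Rinf} {L : ℝ}
    (h1 : ∀ i, α i ≠ 0 → u i ≠ ⊤)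
    (h2 : Tendsto (psum α u) atTop (nhds L)) : scomb α u = (L : Rinf) := by
  have h : (∀ i, α i ≠ 0 → u i ≠ ⊤) ∧
      ∃ M : ℝ, Tendsto (fun N => ∑ i ∈ Finset.range N, α i * (u i).untopD 0) atTop (nhds M) :=
    ⟨h1, L, h2⟩
  rw [scomb, dif_pos h]
  exact congrArg _ (tendsto_nhds_unique h.2.choose_spec h2)

lemma scomb_eq_top_of_top {α : ℕ → ℝ} {u : ℕ → Rinf} (h : ∃ i, α i ≠ 0 ∧ u i = ⊤) :
    scomb α u = ⊤ := by
  rw [scomb, dif_neg]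
  rintro ⟨h1, -⟩
  obtain ⟨i, hi, ht⟩ := h
  exact h1 i hi ht

lemma scomb_eq_top_of_div {α : ℕ → ℝ} {u : ℕ → Rinf}
    (h : ∀ L : ℝ, ¬ Tendsto (psum α u) atTop (nhds L)) : scomb α u = ⊤ := by
  rw [scomb, dif_neg]
  rintro ⟨-, L, hL⟩
  exact h L hL

lemma affEndo_lmap (c b : ℝ) (hc : c ≠ 0) : AffEndo (lmap c b) := by
  intro α hα u
  have hW : Tendsto (fun N => ∑ i ∈ Finset.range N, α i) atTop (nhds 1) :=
    hα.2.tendsto_sum_nat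
  by_cases h : (∀ i, α i ≠ 0 → u i ≠ ⊤) ∧
      ∃ L : ℝ, Tendsto (fun N => ∑ i ∈ Finset.range N, α i * (u i).untopD 0) atTop (nhds L)
  · obtain ⟨h1, L, hL⟩ := h
    have hsum : ∀ N, psum α (fun i => lmap c b (u i)) N
        = c * psum α u N + b * ∑ i ∈ Finset.range N, α i := by
      intro N
      rw [psum, psum, Finset.mul_sum, Finset.mul_sum, ← Finset.sum_add_distrib]
      refine Finset.sum_congr rfl fun i _ => ?_
      by_cases hai : α i = 0
      · simp [hai]
      · obtain ⟨x, hx⟩ := WithTop.ne_top_iff_exists.1 (h1 i hai)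
        rw [← hx, lmap_coe, WithTop.untopD_coe, WithTop.untopD_coe]; ring
    have e1 : scomb α u = (L : Rinf) := scomb_eq_coe h1 hL
    have h1' : ∀ i, α i ≠ 0 → lmap c b (u i) ≠ ⊤ := by
      intro i hai
      obtain ⟨x, hx⟩ := WithTop.ne_top_iff_exists.1 (h1 i hai)
      rw [← hx, lmap_coe]; exact WithTop.coe_ne_top
    have e2 : scomb α (fun i => lmap c b (u i)) = ((c * L + b : ℝ) : Rinf) := by
      refine scomb_eq_coe h1' ?_
      have h' : Tendsto (fun N => c * psum α u N + b * ∑ i ∈ Finset.range N, α i)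
          atTop (nhds (c * L + b * 1)) := (hL.const_mul c).add (hW.const_mul b)
      rw [mul_one] at h'
      exact h'.congr fun N => (hsum N).symm
    rw [e1, e2, lmap_coe]
  · have e1 : scomb α u = ⊤ := by rw [scomb, dif_neg h]
    rw [e1, lmap_top]
    by_cases h1 : ∀ i, α i ≠ 0 → u i ≠ ⊤
    · refine (scomb_eq_top_of_div ?_).symm
      intro M hM
      apply h
      refine ⟨h1, (M - b) / c, ?_⟩
      have hsum : ∀ N, psum α (fun i => lmap c b (u i)) N
          = c * psum α u N + b * ∑ i ∈ Finset.range N, α i := by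
        intro N
        rw [psum, psum, Finset.mul_sum, Finset.mul_sum, ← Finset.sum_add_distrib]
        refine Finset.sum_congr rfl fun i _ => ?_
        by_cases hai : α i = 0
        · simp [hai]
        · obtain ⟨x, hx⟩ := WithTop.ne_top_iff_exists.1 (h1 i hai)
          rw [← hx, lmap_coe, WithTop.untopD_coe, WithTop.untopD_coe]; ring
      have h' : Tendsto
          (fun N => (psum α (fun i => lmap c b (u i)) N - b * ∑ i ∈ Finset.range N, α i) / c)
          atTop (nhds ((M - b * 1) / c)) := (hM.sub (hW.const_mul b)).div_const c
      rw [mul_one] at h'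
      refine Tendsto.congr ?_ h'
      intro N
      rw [hsum N]
      rw [psum]
      field_simp
      ring
    · push_neg at h1
      obtain ⟨i, hai, hui⟩ := h1
      refine (scomb_eq_top_of_top ⟨i, hai, ?_⟩).symm
      rw [hui]; rfl

lemma ca_comp {A : Type*} {S : SuperConvexSpace A} {g : Rinf → Rinf} (hg : AffEndo g)
    {m : A → Rinf} (hm : CountablyAffine S m) : CountablyAffine S (fun a => g (m a)) := by
  intro α hα u
  calc g (m (S.comb α u)) = g (scomb α fun i => m (u i)) := by rw [hm α hα u]
    _ = scomb α (fun i => g (m (u i))) := hg α hα _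

lemma ca_const_zero {A : Type*} (S : SuperConvexSpace A) :
    CountablyAffine S (fun _ => (0 : Rinf)) := by
  intro α hα u
  have : scomb α (fun _ : ℕ => (0 : Rinf)) = ((0 : ℝ) : Rinf) := by
    refine scomb_eq_coe (fun i _ => by simp) ?_
    have : ∀ N, psum α (fun _ : ℕ => (0 : Rinf)) N = 0 := by
      intro N
      rw [psum]
      refine Finset.sum_eq_zero fun i _ => by simp [(rfl : ((0:Rinf)) = ((0:ℝ):Rinf))]
    exact tendsto_const_nhds.congr fun N => (this N).symm
  rw [this]
  norm_num

noncomputable def al : ℕ → ℝ := fun i => (1 / 2) * (1 / 2) ^ i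

lemma al_pos (i : ℕ) : 0 < al i := by
  rw [al]; positivity

lemma al_ne (i : ℕ) : al i ≠ 0 := (al_pos i).ne'

lemma al_part : IsPartition al := by
  constructor
  · intro i
    constructor
    · exact (al_pos i).le
    · rw [al]
      have : (1 / 2 : ℝ) ^ i ≤ 1 := pow_le_one₀ (by norm_num) (by norm_num)
      nlinarith
  · have := hasSum_geometric_two.mul_left (1 / 2 : ℝ)
    norm_num at this
    exact this

lemma tendsto_four_mul : Tendsto (fun n : ℕ => 4*n) atTop atTop :=
  tendsto_atTop_mono (fun n => show id n ≤ 4*n by simp only [id_eq]; omega) tendsto_id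

lemma tendsto_four_mul_add_one : Tendsto (fun n : ℕ => 4*n+1) atTop atTop :=
  tendsto_atTop_mono (fun n => show id n ≤ 4*n+1 by simp only [id_eq]; omega) tendsto_id

lemma tendsto_two_mul : Tendsto (fun n : ℕ => 2*n) atTop atTop :=
  tendsto_atTop_mono (fun n => show id n ≤ 2*n by simp only [id_eq]; omega) tendsto_id

/-- An `ℝ∞`-generalized element `J` of a super convex space `A` (countably affine,
weakly averaging, commuting with countably affine endomaps of `ℝ∞`) is monotone on
countably affine maps. -/
theorem stmt_3 {A : Type*} (S : SuperConvexSpace A) (J : (A → Rinf) → Rinf)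
    (hJcomb : ∀ (α : ℕ → ℝ), IsPartition α → ∀ m : ℕ → A → Rinf,
      (∀ i, CountablyAffine S (m i)) →
      J (fun a => scomb α (fun i => m i a)) = scomb α (fun i => J (m i)))
    (hJavg : ∀ u : Rinf, J (fun _ => u) = u)
    (hJnat : ∀ g : Rinf → Rinf, AffEndo g → ∀ m : A → Rinf, CountablyAffine S m →
      J (g ∘ m) = g (J m))
    (m₁ m₂ : A → Rinf) (h₁ : CountablyAffine S m₁) (h₂ : CountablyAffine S m₂)
    (hle : ∀ a, m₁ a ≤ m₂ a) :
    J m₁ ≤ J m₂ := by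
  classical
  by_cases hv : J m₂ = ⊤
  · rw [hv]; exact le_top
  obtain ⟨σ, hσ⟩ := WithTop.ne_top_iff_exists.1 hv
  have Jlin : ∀ (c b : ℝ), c ≠ 0 → ∀ m : A → Rinf, CountablyAffine S m →
      J (fun a => lmap c b (m a)) = lmap c b (J m) := by
    intro c b hc m hm
    have := hJnat (lmap c b) (affEndo_lmap c b hc) m hm
    rwa [Function.comp_def] at this
  -- Step 1 : J m₁ is not ⊤
  have hw_ne : J m₁ ≠ ⊤ := by
    intro hw
    set k1 : ℕ → A → Rinf := fun i a =>
      if i % 4 = 0 then lmap (1 / al i) (-(σ / al i)) (m₂ a)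
      else if i % 4 = 1 then lmap (-(1 / al i)) (σ / al i) (m₂ a)
      else if i % 4 = 2 then lmap 1 0 (m₁ a)
      else lmap (-(al (i - 1) / al i)) 0 (m₁ a) with hk1
    set k2 : ℕ → A → Rinf := fun i a =>
      if i % 4 = 0 then lmap (1 / al i) (-(σ / al i)) (m₂ a)
      else if i % 4 = 1 then lmap (-(1 / al i)) (σ / al i) (m₂ a)
      else (0 : Rinf) with hk2
    have hca1 : ∀ i, CountablyAffine S (k1 i) := by
      intro i
      rcases (by omega : i % 4 = 0 ∨ i % 4 = 1 ∨ i % 4 = 2 ∨ i % 4 = 3) with h | h | h | h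
      · have e : k1 i = fun a => lmap (1 / al i) (-(σ / al i)) (m₂ a) := by
          funext a; rw [hk1]; simp [h]
        rw [e]; exact ca_comp (affEndo_lmap _ _ (one_div_ne_zero (al_ne i))) h₂
      · have e : k1 i = fun a => lmap (-(1 / al i)) (σ / al i) (m₂ a) := by
          funext a; rw [hk1]; simp [h]
        rw [e]; exact ca_comp (affEndo_lmap _ _ (neg_ne_zero.2 (one_div_ne_zero (al_ne i)))) h₂
      · have e : k1 i = fun a => lmap 1 0 (m₁ a) := by
          funext a; rw [hk1]; simp [h]
        rw [e]; exact ca_comp (affEndo_lmap _ _ one_ne_zero) h₁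
      · have e : k1 i = fun a => lmap (-(al (i - 1) / al i)) 0 (m₁ a) := by
          funext a; rw [hk1]; simp [h]
        rw [e]
        exact ca_comp (affEndo_lmap _ _ (neg_ne_zero.2 (div_ne_zero (al_ne _) (al_ne i)))) h₁
    have hca2 : ∀ i, CountablyAffine S (k2 i) := by
      intro i
      rcases (by omega : i % 4 = 0 ∨ i % 4 = 1 ∨ i % 4 = 2 ∨ i % 4 = 3) with h | h | h | h
      · have e : k2 i = fun a => lmap (1 / al i) (-(σ / al i)) (m₂ a) := by
          funext a; rw [hk2]; simp [h]
        rw [e]; exact ca_comp (affEndo_lmap _ _ (one_div_ne_zero (al_ne i))) h₂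
      · have e : k2 i = fun a => lmap (-(1 / al i)) (σ / al i) (m₂ a) := by
          funext a; rw [hk2]; simp [h]
        rw [e]; exact ca_comp (affEndo_lmap _ _ (neg_ne_zero.2 (one_div_ne_zero (al_ne i)))) h₂
      · have e : k2 i = fun _ => (0 : Rinf) := by
          funext a; rw [hk2]; simp [h]
        rw [e]; exact ca_const_zero S
      · have e : k2 i = fun _ => (0 : Rinf) := by
          funext a; rw [hk2]; simp [h]
        rw [e]; exact ca_const_zero S
    have hJk2 : ∀ i, J (k2 i) = ((0 : ℝ) : Rinf) := by
      intro i
      rcases (by omega : i % 4 = 0 ∨ i % 4 = 1 ∨ i % 4 = 2 ∨ i % 4 = 3) with h | h | h | h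
      · have e : k2 i = fun a => lmap (1 / al i) (-(σ / al i)) (m₂ a) := by
          funext a; rw [hk2]; simp [h]
        rw [e, Jlin _ _ (one_div_ne_zero (al_ne i)) m₂ h₂, ← hσ, lmap_coe]
        refine congrArg (fun x : ℝ => (x : Rinf)) ?_
        ring
      · have e : k2 i = fun a => lmap (-(1 / al i)) (σ / al i) (m₂ a) := by
          funext a; rw [hk2]; simp [h]
        rw [e, Jlin _ _ (neg_ne_zero.2 (one_div_ne_zero (al_ne i))) m₂ h₂, ← hσ, lmap_coe]
        refine congrArg (fun x : ℝ => (x : Rinf)) ?_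
        ring
      · have e : k2 i = fun _ => (0 : Rinf) := by
          funext a; rw [hk2]; simp [h]
        rw [e, hJavg]; norm_num
      · have e : k2 i = fun _ => (0 : Rinf) := by
          funext a; rw [hk2]; simp [h]
        rw [e, hJavg]; norm_num
    have hJ12 : J (k1 2) = ⊤ := by
      have e : k1 2 = fun a => lmap 1 0 (m₁ a) := by
        funext a; rw [hk1]; norm_num
      rw [e, Jlin 1 0 one_ne_zero m₁ h₁, hw, lmap_top]
    have hSS : (fun a => scomb al (fun i => k1 i a)) = (fun a => scomb al (fun i => k2 i a)) := by
      funext a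
      by_cases h2top : m₂ a = ⊤
      · have e1 : k1 0 a = ⊤ := by rw [hk1]; simp [h2top, lmap_top]
        have e2 : k2 0 a = ⊤ := by rw [hk2]; simp [h2top, lmap_top]
        rw [scomb_eq_top_of_top ⟨0, al_ne 0, e1⟩, scomb_eq_top_of_top ⟨0, al_ne 0, e2⟩]
      · obtain ⟨t, ht⟩ := WithTop.ne_top_iff_exists.1 h2top
        have hm1ne : m₁ a ≠ ⊤ := ne_top_of_le_ne_top h2top (hle a)
        obtain ⟨s, hs⟩ := WithTop.ne_top_iff_exists.1 hm1ne
        have T10 : ∀ i, i % 4 = 0 → al i * ((k1 i a).untopD 0) = t - σ := by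
          intro i h
          have hai := al_ne i
          rw [hk1]; simp only [h, reduceIte, ← ht, lmap_coe, WithTop.untopD_coe]
          field_simp
          ring
        have T11 : ∀ i, i % 4 = 1 → al i * ((k1 i a).untopD 0) = σ - t := by
          intro i h
          have hai := al_ne i
          rw [hk1]; simp only [h, Nat.reduceEqDiff, reduceIte, ← ht, lmap_coe, WithTop.untopD_coe]
          field_simp
          ring
        have T12 : ∀ i, i % 4 = 2 → al i * ((k1 i a).untopD 0) = al i * s := by
          intro i h
          have h0 : ¬ i % 4 = 0 := by omega
          have h1 : ¬ i % 4 = 1 := by omega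
          rw [hk1]; simp only [h0, h1, h, Nat.reduceEqDiff, reduceIte, ← hs, lmap_coe, WithTop.untopD_coe]
          ring
        have T13 : ∀ i, i % 4 = 3 → al i * ((k1 i a).untopD 0) = -(al (i - 1) * s) := by
          intro i h
          have hai := al_ne i
          rw [hk1]; simp only [h, Nat.reduceEqDiff, reduceIte, ← hs, lmap_coe, WithTop.untopD_coe]
          field_simp
          ring
        have T20 : ∀ i, i % 4 = 0 → al i * ((k2 i a).untopD 0) = t - σ := by
          intro i h
          have hai := al_ne i
          rw [hk2]; simp only [h, reduceIte, ← ht, lmap_coe, WithTop.untopD_coe]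
          field_simp
          ring
        have T21 : ∀ i, i % 4 = 1 → al i * ((k2 i a).untopD 0) = σ - t := by
          intro i h
          have hai := al_ne i
          rw [hk2]; simp only [h, Nat.reduceEqDiff, reduceIte, ← ht, lmap_coe, WithTop.untopD_coe]
          field_simp
          ring
        have T22 : ∀ i, i % 4 = 2 ∨ i % 4 = 3 → al i * ((k2 i a).untopD 0) = 0 := by
          intro i h
          rcases h with h | h <;> rw [hk2] <;> simp only [h, reduceIte] <;> simp
        have key0 : ∀ n, psum al (fun i => k1 i a) (4*n) = 0 := by
          intro n
          induction n with
          | zero => simp [psum]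
          | succ n ih =>
            have e : 4*(n+1) = (4*n)+1+1+1+1 := by ring
            rw [e]
            simp only [psum] at ih ⊢
            rw [Finset.sum_range_succ, Finset.sum_range_succ, Finset.sum_range_succ,
              Finset.sum_range_succ, ih, T10 (4*n) (by omega), T11 (4*n+1) (by omega),
              T12 (4*n+1+1) (by omega), T13 (4*n+1+1+1) (by omega),
              show 4*n+1+1+1-1 = 4*n+1+1 from by omega]
            ring
        have key1 : ∀ n, psum al (fun i => k1 i a) (4*n+1) = t - σ := by
          intro n
          have h0 := key0 n
          simp only [psum] at h0 ⊢
          rw [Finset.sum_range_succ, h0, T10 (4*n) (by omega)]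
          ring
        have key2 : ∀ n, psum al (fun i => k1 i a) (4*n+1+1) = 0 := by
          intro n
          have h0 := key1 n
          simp only [psum] at h0 ⊢
          rw [Finset.sum_range_succ, h0, T11 (4*n+1) (by omega)]
          ring
        have key3 : ∀ n, psum al (fun i => k1 i a) (4*n+1+1+1) = al (4*n+1+1) * s := by
          intro n
          have h0 := key2 n
          simp only [psum] at h0 ⊢
          rw [Finset.sum_range_succ, h0, T12 (4*n+1+1) (by omega)]
          ring
        have qey0 : ∀ n, psum al (fun i => k2 i a) (4*n) = 0 := by
          intro n
          induction n with
          | zero => simp [psum]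
          | succ n ih =>
            have e : 4*(n+1) = (4*n)+1+1+1+1 := by ring
            rw [e]
            simp only [psum] at ih ⊢
            rw [Finset.sum_range_succ, Finset.sum_range_succ, Finset.sum_range_succ,
              Finset.sum_range_succ, ih, T20 (4*n) (by omega), T21 (4*n+1) (by omega),
              T22 (4*n+1+1) (by left; omega), T22 (4*n+1+1+1) (by right; omega)]
            ring
        have qey1 : ∀ n, psum al (fun i => k2 i a) (4*n+1) = t - σ := by
          intro n
          have h0 := qey0 n
          simp only [psum] at h0 ⊢
          rw [Finset.sum_range_succ, h0, T20 (4*n) (by omega)]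
          ring
        have qey2 : ∀ n, psum al (fun i => k2 i a) (4*n+1+1) = 0 := by
          intro n
          have h0 := qey1 n
          simp only [psum] at h0 ⊢
          rw [Finset.sum_range_succ, h0, T21 (4*n+1) (by omega)]
          ring
        have qey3 : ∀ n, psum al (fun i => k2 i a) (4*n+1+1+1) = 0 := by
          intro n
          have h0 := qey2 n
          simp only [psum] at h0 ⊢
          rw [Finset.sum_range_succ, h0, T22 (4*n+1+1) (by left; omega)]
          ring
        by_cases hts : t = σ
        · have hne1 : ∀ i, al i ≠ 0 → k1 i a ≠ ⊤ := by
            intro i _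
            rcases (by omega : i % 4 = 0 ∨ i % 4 = 1 ∨ i % 4 = 2 ∨ i % 4 = 3) with h | h | h | h
            · rw [hk1]; simp only [h, reduceIte, ← ht, lmap_coe]
              exact WithTop.coe_ne_top
            · have h0 : ¬ i % 4 = 0 := by omega
              rw [hk1]; simp only [h0, h, reduceIte, ← ht, lmap_coe]
              exact WithTop.coe_ne_top
            · have h0 : ¬ i % 4 = 0 := by omega
              have h1 : ¬ i % 4 = 1 := by omega
              rw [hk1]; simp only [h0, h1, h, reduceIte, ← hs, lmap_coe]
              exact WithTop.coe_ne_top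
            · have h0 : ¬ i % 4 = 0 := by omega
              have h1 : ¬ i % 4 = 1 := by omega
              have h2 : ¬ i % 4 = 2 := by omega
              rw [hk1]; simp only [h0, h1, h2, reduceIte, ← hs, lmap_coe]
              exact WithTop.coe_ne_top
          have hne2 : ∀ i, al i ≠ 0 → k2 i a ≠ ⊤ := by
            intro i _
            rcases (by omega : i % 4 = 0 ∨ i % 4 = 1 ∨ i % 4 = 2 ∨ i % 4 = 3) with h | h | h | h
            · rw [hk2]; simp only [h, reduceIte, ← ht, lmap_coe]
              exact WithTop.coe_ne_top
            · have h0 : ¬ i % 4 = 0 := by omega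
              rw [hk2]; simp only [h0, h, reduceIte, ← ht, lmap_coe]
              exact WithTop.coe_ne_top
            · rw [hk2]; simp [h]
            · rw [hk2]; simp [h]
          have bound : ∀ N, |psum al (fun i => k1 i a) N| ≤ |s| * (1/2 : ℝ)^N := by
            intro N
            rcases (by omega : N % 4 = 0 ∨ N % 4 = 1 ∨ N % 4 = 2 ∨ N % 4 = 3) with h | h | h | h
            · have eN : N = 4*(N/4) := by omega
              rw [eN, key0]
              simp only [abs_zero]
              positivity
            · have eN : N = 4*(N/4)+1 := by omega
              rw [eN, key1, hts]
              simp only [sub_self, abs_zero]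
              positivity
            · have eN : N = 4*(N/4)+1+1 := by omega
              rw [eN, key2]
              simp only [abs_zero]
              positivity
            · have eN : N = 4*(N/4)+1+1+1 := by omega
              rw [eN, key3]
              have hal : al (4*(N/4)+1+1) = (1/2 : ℝ)^(4*(N/4)+1+1+1) := by
                rw [show 4*(N/4)+1+1+1 = (4*(N/4)+1+1)+1 from rfl, pow_succ']
                simp only [al]
              rw [hal, abs_mul, abs_pow, abs_of_nonneg (by norm_num : (0:ℝ) ≤ (1:ℝ)/2)]
              exact le_of_eq (mul_comm _ _)
          have S1v : scomb al (fun i => k1 i a) = ((0:ℝ):Rinf) := by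
            refine scomb_eq_coe hne1 ?_
            refine squeeze_zero_norm (a := fun N => |s| * (1/2 : ℝ)^N) ?_ ?_
            · intro N
              rw [Real.norm_eq_abs]
              exact bound N
            · have := (tendsto_pow_atTop_nhds_zero_of_lt_one
                (by norm_num : (0:ℝ) ≤ 1/2) (by norm_num)).const_mul |s|
              simpa using this
          have S2v : scomb al (fun i => k2 i a) = ((0:ℝ):Rinf) := by
            refine scomb_eq_coe hne2 ?_
            refine tendsto_const_nhds.congr fun N => ?_
            symm
            rcases (by omega : N % 4 = 0 ∨ N % 4 = 1 ∨ N % 4 = 2 ∨ N % 4 = 3) with h | h | h | h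
            · have eN : N = 4*(N/4) := by omega
              rw [eN, qey0]
            · have eN : N = 4*(N/4)+1 := by omega
              rw [eN, qey1, hts, sub_self]
            · have eN : N = 4*(N/4)+1+1 := by omega
              rw [eN, qey2]
            · have eN : N = 4*(N/4)+1+1+1 := by omega
              rw [eN, qey3]
          rw [S1v, S2v]
        · have e1 : scomb al (fun i => k1 i a) = ⊤ := by
            refine scomb_eq_top_of_div ?_
            intro L hL
            have c0 : Tendsto (fun n => psum al (fun i => k1 i a) (4*n)) atTop (nhds L) :=
              hL.comp tendsto_four_mul
            have c1 : Tendsto (fun n => psum al (fun i => k1 i a) (4*n+1)) atTop (nhds L) :=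
              hL.comp tendsto_four_mul_add_one
            have l0 : L = 0 := tendsto_nhds_unique (c0.congr fun n => key0 n) tendsto_const_nhds
            have l1 : L = t - σ := tendsto_nhds_unique (c1.congr fun n => key1 n) tendsto_const_nhds
            exact hts (by linarith)
          have e2 : scomb al (fun i => k2 i a) = ⊤ := by
            refine scomb_eq_top_of_div ?_
            intro L hL
            have c0 : Tendsto (fun n => psum al (fun i => k2 i a) (4*n)) atTop (nhds L) :=
              hL.comp tendsto_four_mul
            have c1 : Tendsto (fun n => psum al (fun i => k2 i a) (4*n+1)) atTop (nhds L) :=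
              hL.comp tendsto_four_mul_add_one
            have l0 : L = 0 := tendsto_nhds_unique (c0.congr fun n => qey0 n) tendsto_const_nhds
            have l1 : L = t - σ := tendsto_nhds_unique (c1.congr fun n => qey1 n) tendsto_const_nhds
            exact hts (by linarith)
          rw [e1, e2]
    have key : (⊤ : Rinf) = ((0:ℝ):Rinf) := by
      calc (⊤ : Rinf) = scomb al (fun i => J (k1 i)) :=
            (scomb_eq_top_of_top ⟨2, al_ne 2, hJ12⟩).symm
        _ = J (fun a => scomb al (fun i => k1 i a)) := (hJcomb al al_part k1 hca1).symm
        _ = J (fun a => scomb al (fun i => k2 i a)) := by rw [hSS]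
        _ = scomb al (fun i => J (k2 i)) := hJcomb al al_part k2 hca2
        _ = ((0:ℝ):Rinf) := by
            refine scomb_eq_coe (fun i _ => by rw [hJk2 i]; exact WithTop.coe_ne_top) ?_
            refine tendsto_const_nhds.congr fun N => ?_
            symm; rw [psum]
            exact Finset.sum_eq_zero fun i _ => by rw [hJk2 i, WithTop.untopD_coe, mul_zero]
    exact absurd key (by simp)
  -- Step 2
  obtain ⟨ρ, hρ⟩ := WithTop.ne_top_iff_exists.1 hw_ne
  rw [← hρ, ← hσ, WithTop.coe_le_coe]
  by_contra hlt
  push_neg at hlt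
  set k : ℕ → A → Rinf := fun i a =>
    if i % 2 = 0 then lmap (1 / al i) (-(σ / al i)) (m₂ a)
    else lmap (-(1 / al i)) (ρ / al i) (m₁ a) with hk
  have hca : ∀ i, CountablyAffine S (k i) := by
    intro i
    by_cases h0 : i % 2 = 0
    · have e : k i = fun a => lmap (1 / al i) (-(σ / al i)) (m₂ a) := by
        funext a; rw [hk]; simp [h0]
      rw [e]; exact ca_comp (affEndo_lmap _ _ (one_div_ne_zero (al_ne i))) h₂
    · have e : k i = fun a => lmap (-(1 / al i)) (ρ / al i) (m₁ a) := by
        funext a; rw [hk]; simp [h0]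
      rw [e]; exact ca_comp (affEndo_lmap _ _ (neg_ne_zero.2 (one_div_ne_zero (al_ne i)))) h₁
  have hJk : ∀ i, J (k i) = ((0 : ℝ) : Rinf) := by
    intro i
    by_cases h0 : i % 2 = 0
    · have e : k i = fun a => lmap (1 / al i) (-(σ / al i)) (m₂ a) := by
        funext a; rw [hk]; simp [h0]
      rw [e, Jlin _ _ (one_div_ne_zero (al_ne i)) m₂ h₂, ← hσ, lmap_coe]
      refine congrArg (fun x : ℝ => (x : Rinf)) ?_
      ring
    · have e : k i = fun a => lmap (-(1 / al i)) (ρ / al i) (m₁ a) := by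
        funext a; rw [hk]; simp [h0]
      rw [e, Jlin _ _ (neg_ne_zero.2 (one_div_ne_zero (al_ne i))) m₁ h₁, ← hρ, lmap_coe]
      refine congrArg (fun x : ℝ => (x : Rinf)) ?_
      ring
  have hS : (fun a => scomb al (fun i => k i a)) = (fun _ => (⊤ : Rinf)) := by
    funext a
    by_cases h2top : m₂ a = ⊤
    · refine scomb_eq_top_of_top ⟨0, al_ne 0, ?_⟩
      rw [hk]; simp [h2top, lmap_top]
    · obtain ⟨t, ht⟩ := WithTop.ne_top_iff_exists.1 h2top
      have hm1ne : m₁ a ≠ ⊤ := ne_top_of_le_ne_top h2top (hle a)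
      obtain ⟨s, hs⟩ := WithTop.ne_top_iff_exists.1 hm1ne
      have hst : s ≤ t := by
        have := hle a
        rw [← ht, ← hs, WithTop.coe_le_coe] at this
        exact this
      have T : ∀ i, al i * ((k i a).untopD 0) =
          (if i % 2 = 0 then t - σ else ρ - s) := by
        intro i
        by_cases h0 : i % 2 = 0
        · have hai := al_ne i
          rw [hk]; simp only [h0, reduceIte, ← ht, lmap_coe, WithTop.untopD_coe]
          field_simp
          ring
        · have hai := al_ne i
          rw [hk]; simp only [h0, reduceIte, ← hs, lmap_coe, WithTop.untopD_coe]
          field_simp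
          ring
      have R : ∀ n, psum al (fun i => k i a) (2*n) = ((t - σ) + (ρ - s)) * n := by
        intro n
        induction n with
        | zero => simp [psum]
        | succ n ih =>
          have e : 2*(n+1) = (2*n)+1+1 := by ring
          have e0 : (2*n) % 2 = 0 := by omega
          have e1 : (2*n+1) % 2 = 1 := by omega
          rw [e]
          simp only [psum] at ih ⊢
          rw [Finset.sum_range_succ, Finset.sum_range_succ, ih, T (2*n), T (2*n+1), e0, e1]
          simp only [reduceIte]
          push_cast
          ring
      refine scomb_eq_top_of_div ?_
      intro L hL
      have hcpos : 0 < (t - σ) + (ρ - s) := by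
        have : σ < ρ := hlt
        nlinarith [hst]
      have c0 : Tendsto (fun n => psum al (fun i => k i a) (2*n)) atTop (nhds L) :=
        hL.comp tendsto_two_mul
      have c1 : Tendsto (fun n : ℕ => ((t - σ) + (ρ - s)) * (n:ℝ)) atTop (nhds L) :=
        c0.congr fun n => R n
      exact not_tendsto_nhds_of_tendsto_atTop
        (Filter.Tendsto.const_mul_atTop hcpos tendsto_natCast_atTop_atTop) L c1
  have key := hJcomb al al_part k hca
  rw [hS, hJavg] at key
  have kz : scomb al (fun i => J (k i)) = ((0:ℝ):Rinf) := by
    refine scomb_eq_coe (fun i _ => by rw [hJk i]; exact WithTop.coe_ne_top) ?_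
    refine tendsto_const_nhds.congr fun N => ?_
    symm; rw [psum]
    exact Finset.sum_eq_zero fun i _ => by rw [hJk i, WithTop.untopD_coe, mul_zero]
  rw [kz] at key
  exact absurd key (by simp)
end

section
/- Let A be a super convex space and J an ℝ∞-generalized element of A (a countably affine, weakly averaging, order-preserving functional on Hom_SCvx(A, ℝ∞) commuting with countably affine endomaps of ℝ∞). If m : A → ℝ∞ is countably affine with image equal to the half-open interval [u, v) where u > −∞ and v < ∞, then u ≤ J(m) < v, so J(m) ∈ Image(m). -/
open Filter

/-! ### Auxiliary lemmas -/

lemma scomb_eq (α : ℕ → ℝ) (u : ℕ → Rinf) (L : ℝ)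
    (h1 : ∀ i, α i ≠ 0 → u i ≠ ⊤)
    (h2 : Tendsto (fun N => ∑ i ∈ Finset.range N, α i * (u i).untopD 0) atTop (nhds L)) :
    scomb α u = (L : Rinf) := by
  have hP : (∀ i, α i ≠ 0 → u i ≠ ⊤) ∧
      ∃ L : ℝ, Tendsto (fun N => ∑ i ∈ Finset.range N, α i * (u i).untopD 0) atTop (nhds L) :=
    ⟨h1, L, h2⟩
  rw [scomb, dif_pos hP]
  exact congrArg _ (tendsto_nhds_unique hP.2.choose_spec h2)

lemma scomb_eq_top (α : ℕ → ℝ) (u : ℕ → Rinf)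
    (h : ¬((∀ i, α i ≠ 0 → u i ≠ ⊤) ∧
      ∃ L : ℝ, Tendsto (fun N => ∑ i ∈ Finset.range N, α i * (u i).untopD 0) atTop (nhds L))) :
    scomb α u = ⊤ := by
  rw [scomb, dif_neg h]

lemma scomb_const (α : ℕ → ℝ) (hα : IsPartition α) (c : ℝ) :
    scomb α (fun _ => (c : Rinf)) = (c : Rinf) := by
  refine scomb_eq α _ c (fun i _ => WithTop.coe_ne_top) ?_
  have := hα.2.tendsto_sum_nat.mul_const c
  simpa [Finset.sum_mul, WithTop.untopD_coe] using this

lemma const_countablyAffine {A : Type*} (S : SuperConvexSpace A) (c : ℝ) :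
    CountablyAffine S (fun _ => (c : Rinf)) := by
  intro α hα _
  exact (scomb_const α hα c).symm

lemma comp_countablyAffine {A : Type*} {S : SuperConvexSpace A} {g : Rinf → Rinf}
    {m : A → Rinf} (hg : AffEndo g) (hm : CountablyAffine S m) :
    CountablyAffine S (fun a => g (m a)) := by
  intro α hα w
  show g (m (S.comb α w)) = scomb α fun i => g (m (w i))
  rw [hm α hα w, hg α hα]

lemma affEndo_affine (a b : ℝ) (ha : 0 < a) :
    AffEndo (fun x => x.map (fun t => a * t + b)) := by
  intro α hα u
  have key : ∀ h1 : (∀ i, α i ≠ 0 → u i ≠ ⊤), ∀ N,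
      ∑ i ∈ Finset.range N, α i * ((u i).map (fun t => a * t + b)).untopD 0
      = a * (∑ i ∈ Finset.range N, α i * (u i).untopD 0)
        + b * (∑ i ∈ Finset.range N, α i) := by
    intro h1 N
    rw [Finset.mul_sum, Finset.mul_sum, ← Finset.sum_add_distrib]
    refine Finset.sum_congr rfl fun i _ => ?_
    by_cases hi : α i = 0
    · simp [hi]
    · obtain ⟨x, hx⟩ := WithTop.ne_top_iff_exists.mp (h1 i hi)
      rw [← hx, WithTop.map_coe, WithTop.untopD_coe, WithTop.untopD_coe]
      ring
  by_cases h : (∀ i, α i ≠ 0 → u i ≠ ⊤) ∧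
      ∃ L : ℝ, Tendsto (fun N => ∑ i ∈ Finset.range N, α i * (u i).untopD 0) atTop (nhds L)
  · obtain ⟨h1, L, h2⟩ := h
    rw [scomb_eq α u L h1 h2]
    refine (scomb_eq α _ (a * L + b) (fun i hi => by
      simp only [ne_eq, WithTop.map_eq_top_iff]
      exact h1 i hi) ?_).symm
    have : Tendsto (fun N => a * (∑ i ∈ Finset.range N, α i * (u i).untopD 0)
        + b * (∑ i ∈ Finset.range N, α i)) atTop (nhds (a * L + b * 1)) :=
      (h2.const_mul a).add (hα.2.tendsto_sum_nat.const_mul b)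
    rw [mul_one] at this
    exact (tendsto_congr (fun N => (key h1 N).symm)).mp this
  · rw [scomb_eq_top α u h]
    refine Eq.symm (scomb_eq_top α _ ?_)
    rintro ⟨h1', L', h2'⟩
    have h1 : ∀ i, α i ≠ 0 → u i ≠ ⊤ := fun i hi => by
      have := h1' i hi
      simp only [ne_eq, WithTop.map_eq_top_iff] at this
      exact this
    refine h ⟨h1, (L' - b) / a, ?_⟩
    have hsum : Tendsto (fun N => ((∑ i ∈ Finset.range N,
        α i * ((u i).map (fun t => a * t + b)).untopD 0)
        - b * (∑ i ∈ Finset.range N, α i)) / a) atTop (nhds ((L' - b * 1) / a)) :=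
      (h2'.sub (hα.2.tendsto_sum_nat.const_mul b)).div_const a
    rw [mul_one] at hsum
    refine (tendsto_congr (fun N => ?_)).mp hsum
    rw [key h1 N]
    field_simp
    ring

/-- If `J` is an `ℝ∞`-generalized element of `A` (countably affine, weakly averaging,
order-preserving, commuting with countably affine endomaps of `ℝ∞`) and `m` is countably
affine with image `[u, v) ⊆ ℝ`, then `u ≤ J(m) < v`, so `J(m) ∈ Image(m)`. -/
theorem stmt_5 {A : Type*} (S : SuperConvexSpace A) (J : (A → Rinf) → Rinf)
    (hJcomb : ∀ (α : ℕ → ℝ), IsPartition α → ∀ m : ℕ → A → Rinf,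
      (∀ i, CountablyAffine S (m i)) →
      J (fun a => scomb α (fun i => m i a)) = scomb α (fun i => J (m i)))
    (hJavg : ∀ w : Rinf, J (fun _ => w) = w)
    (hJmono : ∀ m₁ m₂ : A → Rinf, CountablyAffine S m₁ → CountablyAffine S m₂ →
      (∀ a, m₁ a ≤ m₂ a) → J m₁ ≤ J m₂)
    (hJnat : ∀ g : Rinf → Rinf, AffEndo g → ∀ m : A → Rinf, CountablyAffine S m →
      J (g ∘ m) = g (J m))
    (m : A → Rinf) (hm : CountablyAffine S m) (u v : ℝ)
    (hrange : Set.range m = (fun x : ℝ => (x : Rinf)) '' Set.Ico u v) :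
    (u : Rinf) ≤ J m ∧ J m < (v : Rinf) ∧ J m ∈ Set.range m := by
  -- every value of m is a real in [u, v)
  have hmem : ∀ a, ∃ x : ℝ, m a = (x : Rinf) ∧ u ≤ x ∧ x < v := by
    intro a
    have : m a ∈ Set.range m := ⟨a, rfl⟩
    rw [hrange] at this
    obtain ⟨x, hx, hxa⟩ := this
    exact ⟨x, hxa.symm, hx.1, hx.2⟩
  -- lower bound
  have hle_u : (u : Rinf) ≤ J m := by
    have := hJmono (fun _ => (u : Rinf)) m (const_countablyAffine S u) hm (fun a => by
      obtain ⟨x, hx, hux, _⟩ := hmem a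
      rw [hx]
      show ((u : ℝ) : Rinf) ≤ ((x : ℝ) : Rinf)
      exact_mod_cast hux)
    rwa [hJavg] at this
  -- upper bound (weak)
  have hle_v : J m ≤ (v : Rinf) := by
    have := hJmono m (fun _ => (v : Rinf)) hm (const_countablyAffine S v) (fun a => by
      obtain ⟨x, hx, _, hxv⟩ := hmem a
      rw [hx]
      show ((x : ℝ) : Rinf) ≤ ((v : ℝ) : Rinf)
      exact_mod_cast hxv.le)
    rwa [hJavg] at this
  -- J m is a real number t
  obtain ⟨t, ht⟩ : ∃ t : ℝ, J m = (t : Rinf) := by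
    have : J m ≠ ⊤ := fun h => by
      rw [h] at hle_v
      exact (lt_irrefl _ (lt_of_le_of_lt hle_v (WithTop.coe_lt_top v))).elim
    obtain ⟨t, ht⟩ := WithTop.ne_top_iff_exists.mp this
    exact ⟨t, ht.symm⟩
  have htv_le : t ≤ v := by
    rw [ht] at hle_v
    exact_mod_cast hle_v
  have hut : u ≤ t := by
    rw [ht] at hle_u
    exact_mod_cast hle_u
  -- strict upper bound
  have htv : t < v := by
    rcases lt_or_eq_of_le htv_le with h | h
    · exact h
    · exfalso
      -- t = v : derive a contradiction
      set α : ℕ → ℝ := fun i => 1 / 2 / 2 ^ i with hαdef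
      have hα : IsPartition α := by
        constructor
        · intro i
          simp only [hαdef, Set.mem_Icc]
          have h2 : (1 : ℝ) ≤ 2 ^ i := one_le_pow₀ (by norm_num)
          constructor
          · positivity
          · rw [div_div, div_le_one (by positivity)]
            nlinarith
        · exact hasSum_geometric_two' 1
      set g : ℕ → Rinf → Rinf := fun i x => x.map (fun s => 2 ^ i * s + (1 - 2 ^ i) * v)
        with hgdef
      have hg : ∀ i, AffEndo (g i) := fun i =>
        affEndo_affine (2 ^ i) ((1 - 2 ^ i) * v) (by positivity)
      set M : ℕ → A → Rinf := fun i a => g i (m a) with hMdef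
      have hMaff : ∀ i, CountablyAffine S (M i) := fun i =>
        comp_countablyAffine (hg i) hm
      have hcomb := hJcomb α hα M hMaff
      -- LHS: for every a, the combination diverges
      have hLHS : ∀ a, scomb α (fun i => M i a) = ⊤ := by
        intro a
        obtain ⟨x, hx, _, hxv⟩ := hmem a
        refine scomb_eq_top α _ ?_
        rintro ⟨_, L, hL⟩
        have hterm : ∀ N, ∑ i ∈ Finset.range N, α i * ((M i a).untopD 0)
            = (N : ℝ) * ((x - v) / 2) + v * ∑ i ∈ Finset.range N, α i := by
          intro N
          have hpt : ∀ i, α i * ((M i a).untopD 0) = (x - v) / 2 + v * α i := by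
            intro i
            simp only [hMdef, hgdef, hx, WithTop.map_coe, WithTop.untopD_coe, hαdef]
            have h2i : (2 : ℝ) ^ i ≠ 0 := by positivity
            field_simp
            ring
          rw [Finset.sum_congr rfl (fun i _ => hpt i), Finset.sum_add_distrib,
            Finset.sum_const, Finset.card_range, nsmul_eq_mul, ← Finset.mul_sum]
        -- so the sum minus a convergent part tends to atBot, contradiction
        have hconv : Tendsto (fun N => v * ∑ i ∈ Finset.range N, α i) atTop (nhds (v * 1)) :=
          hα.2.tendsto_sum_nat.const_mul v
        have hdiff : Tendsto (fun N => (∑ i ∈ Finset.range N, α i * ((M i a).untopD 0))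
            - v * ∑ i ∈ Finset.range N, α i) atTop (nhds (L - v * 1)) :=
          hL.sub hconv
        have heq : (fun N => (∑ i ∈ Finset.range N, α i * ((M i a).untopD 0))
            - v * ∑ i ∈ Finset.range N, α i) = fun N : ℕ => (N : ℝ) * ((x - v) / 2) := by
          funext N
          rw [hterm N]
          ring
        rw [heq] at hdiff
        have hbot : Tendsto (fun N : ℕ => (N : ℝ) * ((x - v) / 2)) atTop atBot := by
          refine Tendsto.atTop_mul_const_of_neg (by linarith)
            (tendsto_natCast_atTop_atTop : Tendsto (Nat.cast : ℕ → ℝ) atTop atTop)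
        exact not_tendsto_atBot_of_tendsto_nhds hdiff hbot
      -- RHS: each J (M i) = v
      have hRHS : ∀ i, J (M i) = (v : Rinf) := by
        intro i
        have := hJnat (g i) (hg i) m hm
        have hMi : M i = (g i) ∘ m := rfl
        rw [hMi, this, ht, h]
        show (((2 : ℝ) ^ i * v + (1 - 2 ^ i) * v : ℝ) : Rinf) = ((v : ℝ) : Rinf)
        exact WithTop.coe_inj.mpr (by ring)
      rw [funext hLHS, hJavg] at hcomb
      rw [funext hRHS, scomb_const α hα v] at hcomb
      exact (WithTop.top_ne_coe) hcomb
  refine ⟨hle_u, ?_, ?_⟩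
  · rw [ht]
    exact_mod_cast htv
  · rw [hrange, ht]
    exact ⟨t, ⟨hut, htv⟩, rfl⟩
end
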